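/- Let p be a prime, e ≥ 1, and let r : {1,…,e} → ℕ be a nonincreasing sequence of positive integers (r_i ≥ r_{i+1} ≥ 1). Define α = (1 + (p−1)∑_{i=1}^e p^{e−i} r_i)/p^e and, for 2 ≤ l ≤ p^e, ε(l) = α − (1 + ∑_{i=1}^e r_i w_i(l))/l where w_i(m) = ⌊(m-1)/p^{i-1}⌋ − ⌊(m-1)/p^i⌋. Then ε(l) ≥ 0 for all 2 ≤ l ≤ p^e. -/

import Mathlib

/-- `w p i m = ⌊(m-1)/p^(i-1)⌋ - ⌊(m-1)/p^i⌋` (natural floor division). -/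
def w (p i m : ℕ) : ℕ := (m - 1) / p ^ (i - 1) - (m - 1) / p ^ i

lemma div_pow_pred (p e j : ℕ) (hp : 2 ≤ p) (hj : j ≤ e) :
    (p ^ e - 1) / p ^ j = p ^ (e - j) - 1 := by
  have hpe : p ^ j * p ^ (e - j) = p ^ e := by rw [← pow_add]; congr 1; omega
  have h1 : 1 ≤ p ^ j := Nat.one_le_pow _ _ (by omega)
  have h2 : 1 ≤ p ^ (e - j) := Nat.one_le_pow _ _ (by omega)
  have key : p ^ e - 1 = (p ^ j - 1) + (p ^ (e - j) - 1) * p ^ j := by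
    have : (p ^ (e - j)) * p ^ j = p ^ e := by rw [mul_comm]; exact hpe
    nlinarith [Nat.sub_add_cancel h1, Nat.sub_add_cancel h2,
      Nat.sub_add_cancel (show 1 ≤ p ^ e from Nat.one_le_pow _ _ (by omega))]
  rw [key, Nat.add_mul_div_right _ _ (by positivity), Nat.div_eq_of_lt (by omega), zero_add]

lemma w_pow (p e i : ℕ) (hp : 2 ≤ p) (hi : 1 ≤ i) (hie : i ≤ e) :
    w p i (p ^ e) = p ^ (e - i) * (p - 1) := by
  unfold w
  rw [div_pow_pred p e (i-1) hp (by omega), div_pow_pred p e i hp hie]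
  have h2 : 1 ≤ p ^ (e - i) := Nat.one_le_pow _ _ (by omega)
  have he' : e - (i - 1) = (e - i) + 1 := by omega
  rw [he', pow_succ]
  have h3 := Nat.sub_add_cancel h2
  have h4 : p ^ (e - i) * (p - 1) = p ^ (e - i) * p - p ^ (e - i) := by
    rw [Nat.mul_sub, mul_one]
  omega

lemma w_cast (p i m : ℕ) (hp : 2 ≤ p) :
    (w p i m : ℤ) = ((m - 1) / p ^ (i - 1) : ℕ) - ((m - 1) / p ^ i : ℕ) := by
  unfold w
  have h : (m - 1) / p ^ i ≤ (m - 1) / p ^ (i - 1) :=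
    Nat.div_le_div_left (pow_le_pow_right₀ (by omega) (by omega)) (by positivity)
  push_cast [h]
  ring

lemma sum_w (p m k : ℕ) (hp : 2 ≤ p) :
    ∑ i ∈ Finset.range k, (w p (i + 1) m : ℤ) =
      ((m - 1 : ℕ) : ℤ) - (((m - 1) / p ^ k : ℕ) : ℤ) := by
  have : ∀ i, (w p (i + 1) m : ℤ) =
      (fun j => (((m - 1) / p ^ j : ℕ) : ℤ)) i - (fun j => (((m - 1) / p ^ j : ℕ) : ℤ)) (i + 1) := by
    intro i
    simp only [w_cast p (i+1) m hp, Nat.add_sub_cancel]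
  rw [Finset.sum_congr rfl (fun i _ => this i), Finset.sum_range_sub']
  simp

section main
variable (p e l : ℕ)

/-- the summand -/
noncomputable def gg (p e l : ℕ) (i : ℕ) : ℤ :=
  (l : ℤ) * (w p (i + 1) (p ^ e) : ℤ) - (p ^ e : ℤ) * (w p (i + 1) l : ℤ)

lemma G_eval (hp : 2 ≤ p) (hl2 : 2 ≤ l) (k : ℕ) (hk : k ≤ e) :
    ∑ i ∈ Finset.range k, gg p e l i =
      (p ^ e : ℤ) + (p ^ e : ℤ) * (((l - 1) / p ^ k : ℕ) : ℤ) - (l : ℤ) * (p ^ (e - k) : ℤ) := by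
  unfold gg
  rw [Finset.sum_sub_distrib, ← Finset.mul_sum, ← Finset.mul_sum, sum_w p (p ^ e) k hp,
    sum_w p l k hp, div_pow_pred p e k hp hk]
  have h1 : (1 : ℕ) ≤ p ^ e := Nat.one_le_pow _ _ (by omega)
  have h2 : (1 : ℕ) ≤ p ^ (e - k) := Nat.one_le_pow _ _ (by omega)
  have hl1 : (1 : ℕ) ≤ l := by omega
  push_cast [h1, h2, hl1]
  ring

lemma G_nonneg (hp : 2 ≤ p) (hl2 : 2 ≤ l) (k : ℕ) (hk : k ≤ e) :
    0 ≤ ∑ i ∈ Finset.range k, gg p e l i := by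
  rw [G_eval p e l hp hl2 k hk]
  have hmod := Nat.div_add_mod (l - 1) (p ^ k)
  have hlt := Nat.mod_lt (l - 1) (show 0 < p ^ k by positivity)
  set q := (l - 1) / p ^ k with hq
  have hl' : l ≤ p ^ k * q + p ^ k := by omega
  have hmul : l * p ^ (e - k) ≤ (p ^ k * q + p ^ k) * p ^ (e - k) :=
    Nat.mul_le_mul_right _ hl'
  have hpe : p ^ k * p ^ (e - k) = p ^ e := by rw [← pow_add]; congr 1; omega
  have : l * p ^ (e - k) ≤ p ^ e * q + p ^ e := by
    calc l * p ^ (e - k) ≤ (p ^ k * q + p ^ k) * p ^ (e - k) := hmul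
      _ = p ^ e * q + p ^ e := by rw [add_mul]; rw [mul_right_comm, hpe]
  have := @Nat.cast_le ℤ _ _ _ |>.mpr this
  push_cast at this
  linarith

lemma G_top (hp : 2 ≤ p) (hl2 : 2 ≤ l) (hle : l ≤ p ^ e) :
    ∑ i ∈ Finset.range e, gg p e l i = (p ^ e : ℤ) - (l : ℤ) := by
  rw [G_eval p e l hp hl2 e le_rfl, Nat.div_eq_of_lt (by omega), Nat.sub_self, pow_zero]
  push_cast
  ring

lemma main_ineq (hp : 2 ≤ p) (he : 1 ≤ e) (r : ℕ → ℕ)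
    (hmono : ∀ i, 1 ≤ i → i < e → r (i + 1) ≤ r i)
    (hpos : ∀ i ∈ Finset.Icc 1 e, 1 ≤ r i)
    (hl2 : 2 ≤ l) (hle : l ≤ p ^ e) :
    (p ^ e : ℤ) - (l : ℤ) ≤ ∑ i ∈ Finset.range e, (r (i + 1) : ℤ) * gg p e l i := by
  have habel := Finset.sum_range_by_parts (fun i => (r (i + 1) : ℤ)) (gg p e l) e
  simp only [smul_eq_mul] at habel
  rw [habel]
  have he1 : e - 1 + 1 = e := by omega
  rw [he1, G_top p e l hp hl2 hle]
  have hsum : ∑ i ∈ Finset.range (e - 1),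
      ((r (i + 1 + 1) : ℤ) - (r (i + 1) : ℤ)) * ∑ j ∈ Finset.range (i + 1), gg p e l j ≤ 0 := by
    apply Finset.sum_nonpos
    intro i hi
    have hi' : i < e - 1 := Finset.mem_range.mp hi
    apply mul_nonpos_of_nonpos_of_nonneg
    · have := hmono (i + 1) (by omega) (by omega)
      omega
    · exact G_nonneg p e l hp hl2 (i + 1) (by omega)
  have hre : 1 ≤ r e := hpos e (Finset.mem_Icc.mpr ⟨he, le_rfl⟩)
  have hre' : (1 : ℤ) ≤ (r e : ℤ) := by exact_mod_cast hre
  have hPl : (0 : ℤ) ≤ (p ^ e : ℤ) - (l : ℤ) := by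
    have : (l : ℤ) ≤ (p ^ e : ℤ) := by exact_mod_cast hle
    omega
  nlinarith
end main

lemma key_int (p e l : ℕ) (hp : 2 ≤ p) (he : 1 ≤ e) (r : ℕ → ℕ)
    (hmono : ∀ i, 1 ≤ i → i < e → r (i + 1) ≤ r i)
    (hpos : ∀ i ∈ Finset.Icc 1 e, 1 ≤ r i)
    (hl2 : 2 ≤ l) (hle : l ≤ p ^ e) :
    (1 + ∑ i ∈ Finset.Icc 1 e, (r i : ℤ) * (w p i l : ℤ)) * (p : ℤ) ^ e ≤
      (1 + ∑ i ∈ Finset.Icc 1 e, (r i : ℤ) * (w p i (p ^ e) : ℤ)) * (l : ℤ) := by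
  have hmain := main_ineq p e l hp he r hmono hpos hl2 hle
  have expand : ∑ i ∈ Finset.range e, (r (i + 1) : ℤ) * gg p e l i =
      (l : ℤ) * ∑ i ∈ Finset.Icc 1 e, (r i : ℤ) * (w p i (p ^ e) : ℤ) -
      (p : ℤ) ^ e * ∑ i ∈ Finset.Icc 1 e, (r i : ℤ) * (w p i l : ℤ) := by
    rw [← Finset.Ico_add_one_right_eq_Icc, Finset.sum_Ico_eq_sum_range, Finset.sum_Ico_eq_sum_range,
      Nat.add_sub_cancel, Finset.mul_sum, Finset.mul_sum, ← Finset.sum_sub_distrib]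
    apply Finset.sum_congr rfl
    intro i _
    rw [add_comm 1 i]
    unfold gg
    ring
  rw [expand] at hmain
  have hP : ((p : ℤ) ^ e) = ((p ^ e : ℕ) : ℤ) := by push_cast; ring
  rw [hP] at hmain ⊢
  linarith

theorem stmt4 (p e : ℕ) (hp : p.Prime) (he : 1 ≤ e) (r : ℕ → ℕ)
    (hmono : ∀ i, 1 ≤ i → i < e → r (i + 1) ≤ r i)
    (hpos : ∀ i ∈ Finset.Icc 1 e, 1 ≤ r i) :
    ∀ l, 2 ≤ l → l ≤ p ^ e →
      0 ≤ (1 + ((p : ℚ) - 1) * ∑ i ∈ Finset.Icc 1 e, (p : ℚ) ^ (e - i) * (r i : ℚ)) / (p : ℚ) ^ e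
          - (1 + ∑ i ∈ Finset.Icc 1 e, (r i : ℚ) * (w p i l : ℚ)) / (l : ℚ) := by
  intro l hl2 hle
  have hp2 : 2 ≤ p := hp.two_le
  have hl0 : (0 : ℚ) < (l : ℚ) := by positivity
  have hP0 : (0 : ℚ) < (p : ℚ) ^ e := by positivity
  rw [sub_nonneg, div_le_div_iff₀ hl0 hP0]
  have hA : ((p : ℚ) - 1) * ∑ i ∈ Finset.Icc 1 e, (p : ℚ) ^ (e - i) * (r i : ℚ) =
      ∑ i ∈ Finset.Icc 1 e, (r i : ℚ) * (w p i (p ^ e) : ℚ) := by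
    rw [Finset.mul_sum]
    apply Finset.sum_congr rfl
    intro i hi
    obtain ⟨hi1, hi2⟩ := Finset.mem_Icc.mp hi
    rw [w_pow p e i hp2 hi1 hi2]
    have h1 : (1 : ℕ) ≤ p := by omega
    push_cast [h1]
    ring
  rw [hA]
  exact_mod_cast key_int p e l hp2 he r hmono hpos hl2 hle
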